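/- Fix λ > 0 and let x be a BA fixed point. Then x is twice continuously differentiable on [0,∞), x satisfies the differential equation x''(t) − x'(t) + λ(1 − e^{−x(t)}) = 0 for all t ≥ 0, and 0 < x'(t) < λ for all t ≥ 0. -/

import Mathlib

open MeasureTheory

/-- φ_λ(y) = λ(1 − e^{−y}). -/
noncomputable def baPhi (lam y : ℝ) : ℝ := lam * (1 - Real.exp (-y))

/-- A BA fixed point: x : [0,∞) → [0,∞) with x(0) = 0, subexponential decay
`e^{-as} x(s) → 0` for every a > 0, x not identically 0, and
x(t) = ∫₀ᵗ e^u (∫_u^∞ φ_λ(x(s)) e^{−s} ds) du for all t ≥ 0. -/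
def IsBAFixedPoint (lam : ℝ) (x : ℝ → ℝ) : Prop :=
  (∀ t, 0 ≤ t → 0 ≤ x t) ∧
  x 0 = 0 ∧
  (∀ a : ℝ, 0 < a →
    Filter.Tendsto (fun s => Real.exp (-(a * s)) * x s) Filter.atTop (nhds 0)) ∧
  (∃ t, 0 ≤ t ∧ x t ≠ 0) ∧
  (∀ t, 0 ≤ t →
    x t = ∫ u in (0:ℝ)..t, Real.exp u * ∫ s in Set.Ioi u, baPhi lam (x s) * Real.exp (-s))

namespace BAProofAux

open Set Filter

/-- inner integrand -/
noncomputable def hh (lam : ℝ) (x : ℝ → ℝ) (s : ℝ) : ℝ := baPhi lam (x s) * Real.exp (-s)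

/-- inner integral -/
noncomputable def gg (lam : ℝ) (x : ℝ → ℝ) (u : ℝ) : ℝ := ∫ s in Set.Ioi u, hh lam x s

/-- outer integrand -/
noncomputable def FF (lam : ℝ) (x : ℝ → ℝ) (u : ℝ) : ℝ := Real.exp u * gg lam x u

variable {lam : ℝ} {x : ℝ → ℝ}

lemma heq' (hx : IsBAFixedPoint lam x) :
    ∀ t, 0 ≤ t → x t = ∫ u in (0:ℝ)..t, FF lam x u := hx.2.2.2.2

lemma phi_nonneg (hlam : 0 < lam) {y : ℝ} (hy : 0 ≤ y) : 0 ≤ baPhi lam y := by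
  have h1 : Real.exp (-y) ≤ 1 := Real.exp_le_one_iff.2 (by linarith)
  unfold baPhi; nlinarith

lemma phi_lt (hlam : 0 < lam) (y : ℝ) : baPhi lam y < lam := by
  have := Real.exp_pos (-y); unfold baPhi; nlinarith

lemma phi_le (hlam : 0 < lam) (y : ℝ) : baPhi lam y ≤ lam := (phi_lt hlam y).le

lemma phi_pos (hlam : 0 < lam) {y : ℝ} (hy : 0 < y) : 0 < baPhi lam y := by
  have h1 : Real.exp (-y) < 1 := Real.exp_lt_one_iff.2 (by linarith)
  unfold baPhi; nlinarith

lemma hh_nonneg (hlam : 0 < lam) (hnn : ∀ t, 0 ≤ t → 0 ≤ x t) {s : ℝ} (hs : 0 ≤ s) :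
    0 ≤ hh lam x s := mul_nonneg (phi_nonneg hlam (hnn s hs)) (Real.exp_pos _).le

lemma hh_le (hlam : 0 < lam) {s : ℝ} : hh lam x s ≤ lam * Real.exp (-s) :=
  mul_le_mul_of_nonneg_right (phi_le hlam _) (Real.exp_pos _).le

lemma hh_lt (hlam : 0 < lam) {s : ℝ} : hh lam x s < lam * Real.exp (-s) :=
  mul_lt_mul_of_pos_right (phi_lt hlam _) (Real.exp_pos _)

lemma hh_norm_le (hlam : 0 < lam) (hnn : ∀ t, 0 ≤ t → 0 ≤ x t) {s : ℝ} (hs : 0 ≤ s) :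
    ‖hh lam x s‖ ≤ lam * Real.exp (-s) := by
  rw [Real.norm_eq_abs, abs_of_nonneg (hh_nonneg hlam hnn hs)]
  exact hh_le hlam

lemma hh_norm_le_const (hlam : 0 < lam) (hnn : ∀ t, 0 ≤ t → 0 ≤ x t) {s : ℝ} (hs : 0 ≤ s) :
    ‖hh lam x s‖ ≤ lam := by
  refine (hh_norm_le hlam hnn hs).trans ?_
  have h1 : Real.exp (-s) ≤ 1 := Real.exp_le_one_iff.2 (by linarith)
  nlinarith

lemma gg_nonneg (hlam : 0 < lam) (hnn : ∀ t, 0 ≤ t → 0 ≤ x t) {u : ℝ} (hu : 0 ≤ u) :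
    0 ≤ gg lam x u :=
  setIntegral_nonneg measurableSet_Ioi fun s hs => hh_nonneg hlam hnn (hu.trans (le_of_lt hs))

lemma FF_nonneg (hlam : 0 < lam) (hnn : ∀ t, 0 ≤ t → 0 ≤ x t) {u : ℝ} (hu : 0 ≤ u) :
    0 ≤ FF lam x u := mul_nonneg (Real.exp_pos _).le (gg_nonneg hlam hnn hu)

/-- integrability of the inner integrand, given a.e.-measurability of x on (0,∞). -/
lemma hh_integrableOn (hlam : 0 < lam) (hnn : ∀ t, 0 ≤ t → 0 ≤ x t)
    (hm : AEStronglyMeasurable x (volume.restrict (Set.Ioi (0:ℝ))))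
    {t : ℝ} (ht : 0 ≤ t) : IntegrableOn (hh lam x) (Set.Ioi t) := by
  have hmt : AEStronglyMeasurable x (volume.restrict (Set.Ioi t)) :=
    hm.mono_measure (Measure.restrict_mono (Set.Ioi_subset_Ioi ht) le_rfl)
  have hmeas : AEStronglyMeasurable (hh lam x) (volume.restrict (Set.Ioi t)) := by
    have : AEMeasurable x (volume.restrict (Set.Ioi t)) := hmt.aemeasurable
    exact ((aemeasurable_const.mul
      ((aemeasurable_const.sub (Real.measurable_exp.comp_aemeasurable this.neg)))).mul
      (Real.measurable_exp.comp_aemeasurable aemeasurable_id.neg)).aestronglyMeasurable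
  have hbd : IntegrableOn (fun s : ℝ => lam * Real.exp (-s)) (Set.Ioi t) := by
    have := (exp_neg_integrableOn_Ioi t (b := 1) one_pos).const_mul lam
    simpa [IntegrableOn] using this
  refine Integrable.mono' hbd hmeas ?_
  rw [ae_restrict_iff' measurableSet_Ioi]
  exact Filter.Eventually.of_forall fun s hs => hh_norm_le hlam hnn (ht.trans (le_of_lt hs))

lemma gg_split (hlam : 0 < lam) (hnn : ∀ t, 0 ≤ t → 0 ≤ x t)
    (hm : AEStronglyMeasurable x (volume.restrict (Set.Ioi (0:ℝ))))
    {v u : ℝ} (hv : 0 ≤ v) (hvu : v ≤ u) :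
    gg lam x v = (∫ s in Set.Ioc v u, hh lam x s) + gg lam x u := by
  have h1 : IntegrableOn (hh lam x) (Set.Ioc v u) :=
    (hh_integrableOn hlam hnn hm hv).mono_set Set.Ioc_subset_Ioi_self
  have h2 : IntegrableOn (hh lam x) (Set.Ioi u) := hh_integrableOn hlam hnn hm (hv.trans hvu)
  rw [gg, ← Set.Ioc_union_Ioi_eq_Ioi hvu,
    setIntegral_union (Set.Ioc_disjoint_Ioi le_rfl) measurableSet_Ioi h1 h2]
  rfl

lemma gg_antitone (hlam : 0 < lam) (hnn : ∀ t, 0 ≤ t → 0 ≤ x t)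
    (hm : AEStronglyMeasurable x (volume.restrict (Set.Ioi (0:ℝ))))
    {v u : ℝ} (hv : 0 ≤ v) (hvu : v ≤ u) : gg lam x u ≤ gg lam x v := by
  rw [gg_split hlam hnn hm hv hvu]
  have : 0 ≤ ∫ s in Set.Ioc v u, hh lam x s :=
    setIntegral_nonneg measurableSet_Ioc fun s hs => hh_nonneg hlam hnn (hv.trans hs.1.le)
  linarith

lemma gg_lip (hlam : 0 < lam) (hnn : ∀ t, 0 ≤ t → 0 ≤ x t)
    (hm : AEStronglyMeasurable x (volume.restrict (Set.Ioi (0:ℝ))))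
    {v u : ℝ} (hv : 0 ≤ v) (hvu : v ≤ u) :
    gg lam x v - gg lam x u ≤ lam * (u - v) := by
  rw [gg_split hlam hnn hm hv hvu]
  have hb : ‖∫ s in Set.Ioc v u, hh lam x s‖ ≤ lam * (volume (Set.Ioc v u)).toReal := by
    refine norm_setIntegral_le_of_norm_le_const ?_ ?_
    · rw [Real.volume_Ioc]; exact ENNReal.ofReal_lt_top
    · exact fun s hs => hh_norm_le_const hlam hnn (hv.trans hs.1.le)
  rw [Real.volume_Ioc, ENNReal.toReal_ofReal (by linarith), Real.norm_eq_abs] at hb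
  have := (abs_le.1 hb).2
  linarith

lemma gg_contOn (hlam : 0 < lam) (hnn : ∀ t, 0 ≤ t → 0 ≤ x t)
    (hm : AEStronglyMeasurable x (volume.restrict (Set.Ioi (0:ℝ)))) :
    ContinuousOn (gg lam x) (Set.Ici 0) := by
  have : LipschitzOnWith (Real.toNNReal lam) (gg lam x) (Set.Ici 0) := by
    refine LipschitzOnWith.of_dist_le_mul fun a ha b hb => ?_
    have hcoe : (Real.toNNReal lam : ℝ) = lam := Real.coe_toNNReal _ hlam.le
    rw [Real.dist_eq, Real.dist_eq, hcoe]
    rcases le_total a b with h|h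
    · have h1 := gg_lip hlam hnn hm ha h
      have h2 := gg_antitone hlam hnn hm ha h
      rw [abs_of_nonneg (by linarith), abs_of_nonpos (by linarith)]
      linarith
    · have h1 := gg_lip hlam hnn hm hb h
      have h2 := gg_antitone hlam hnn hm hb h
      rw [abs_of_nonpos (by linarith), abs_of_nonneg (by linarith)]
      linarith
  exact this.continuousOn

lemma FF_contOn (hlam : 0 < lam) (hnn : ∀ t, 0 ≤ t → 0 ≤ x t)
    (hm : AEStronglyMeasurable x (volume.restrict (Set.Ioi (0:ℝ)))) :
    ContinuousOn (FF lam x) (Set.Ici 0) :=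
  Real.continuous_exp.continuousOn.mul (gg_contOn hlam hnn hm)

lemma FF_intInt (hlam : 0 < lam) (hnn : ∀ t, 0 ≤ t → 0 ≤ x t)
    (hm : AEStronglyMeasurable x (volume.restrict (Set.Ioi (0:ℝ))))
    {a b : ℝ} (ha : 0 ≤ a) (hb : 0 ≤ b) :
    IntervalIntegrable (FF lam x) volume a b := by
  refine ((FF_contOn hlam hnn hm).mono ?_).intervalIntegrable
  intro z hz
  exact le_trans (le_min ha hb) (by simpa [Set.uIcc, Set.mem_Icc] using hz.1)

lemma x_mono (hlam : 0 < lam) (hnn : ∀ t, 0 ≤ t → 0 ≤ x t)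
    (heq : ∀ t, 0 ≤ t → x t = ∫ u in (0:ℝ)..t, FF lam x u)
    (hm : AEStronglyMeasurable x (volume.restrict (Set.Ioi (0:ℝ)))) :
    MonotoneOn x (Set.Ici 0) := by
  intro a ha b hb hab
  simp only [Set.mem_Ici] at ha hb
  have e : x b - x a = ∫ u in a..b, FF lam x u := by
    rw [heq a ha, heq b hb,
      intervalIntegral.integral_interval_sub_left (FF_intInt hlam hnn hm le_rfl hb)
        (FF_intInt hlam hnn hm le_rfl ha)]
  have hpos : 0 ≤ ∫ u in a..b, FF lam x u :=
    intervalIntegral.integral_nonneg hab fun u hu => FF_nonneg hlam hnn (ha.trans hu.1)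
  linarith

/-- If x is nonzero at some t' ≥ 0, then x is continuous on [0, t']. -/
lemma cont_of_ne (heq : ∀ t, 0 ≤ t → x t = ∫ u in (0:ℝ)..t, FF lam x u)
    {t' : ℝ} (ht' : 0 ≤ t') (hne : x t' ≠ 0) : ContinuousOn x (Set.Icc 0 t') := by
  have hint : IntervalIntegrable (FF lam x) volume 0 t' := by
    by_contra hni
    exact hne (by rw [heq t' ht', intervalIntegral.integral_undef hni])
  have hprim : ContinuousOn (fun s => ∫ u in (0:ℝ)..s, FF lam x u) (Set.Icc 0 t') := by
    rw [← Set.uIcc_of_le ht']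
    apply intervalIntegral.continuousOn_primitive_interval
    rw [Set.uIcc_of_le ht', integrableOn_Icc_iff_integrableOn_Ioc]
    exact hint.1
  exact hprim.congr fun s hs => heq s hs.1

/-- key nontriviality: x is nonzero arbitrarily far out. -/
lemma exists_ne_beyond (hlam : 0 < lam) (hx : IsBAFixedPoint lam x) :
    ∀ T, 0 ≤ T → ∃ s, T < s ∧ x s ≠ 0 := by
  intro T hT
  by_contra hcon
  push_neg at hcon
  have heq := heq' hx
  obtain ⟨hnn, h0, -, ⟨t₁, ht₁, hxt₁⟩, -⟩ := id hx
  set A : Set ℝ := {a : ℝ | 0 ≤ a ∧ ∀ s, a < s → x s = 0} with hA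
  have hTA : T ∈ A := ⟨hT, hcon⟩
  have hbdd : BddBelow A := ⟨0, fun a ha => ha.1⟩
  set T' := sInf A with hT'def
  have hT'0 : 0 ≤ T' := le_csInf ⟨T, hTA⟩ fun a ha => ha.1
  have hzero : ∀ s, T' < s → x s = 0 := by
    intro s hs
    obtain ⟨a, haA, has⟩ := exists_lt_of_csInf_lt ⟨T, hTA⟩ hs
    exact haA.2 s has
  -- continuity on Ioo 0 T'
  have hcont : ContinuousOn x (Set.Ioo 0 T') := by
    intro t ht
    have hτ : t < (t + T') / 2 ∧ (t + T') / 2 < T' := by constructor <;> (obtain ⟨h1, h2⟩ := ht; linarith)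
    have hτA : (t + T') / 2 ∉ A := fun hmem => absurd (csInf_le hbdd hmem) (not_le.2 hτ.2)
    have hex : ∃ s, (t + T') / 2 < s ∧ x s ≠ 0 := by
      by_contra hc; push_neg at hc
      have hmem : (t + T') / 2 ∈ A := by
        simp only [hA, Set.mem_setOf_eq]
        exact ⟨by obtain ⟨h1, h2⟩ := ht; linarith, hc⟩
      exact hτA hmem
    obtain ⟨s₀, hs₀, hs₀ne⟩ := hex
    have hs₀0 : 0 ≤ s₀ := by obtain ⟨h1, h2⟩ := ht; linarith
    have hc := cont_of_ne heq hs₀0 hs₀ne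
    have hts₀ : t < s₀ := lt_trans hτ.1 hs₀
    refine (hc.continuousWithinAt ⟨ht.1.le, hts₀.le⟩).mono_of_mem_nhdsWithin ?_
    have hsub : Set.Ioo 0 T' ∩ Set.Iio s₀ ⊆ Set.Icc 0 s₀ :=
      fun z hz => ⟨hz.1.1.le, hz.2.le⟩
    exact Filter.mem_of_superset
      (Filter.inter_mem self_mem_nhdsWithin
        (mem_nhdsWithin_of_mem_nhds (Iio_mem_nhds hts₀))) hsub
  -- a.e. strong measurability of x on (0,∞)
  have hm : AEStronglyMeasurable x (volume.restrict (Set.Ioi (0:ℝ))) := by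
    have hind : AEMeasurable (Set.indicator (Set.Ioo 0 T') x) volume :=
      (aemeasurable_indicator_iff measurableSet_Ioo).2
        (hcont.aemeasurable measurableSet_Ioo)
    have hae : (Set.indicator (Set.Ioo 0 T') x) =ᵐ[volume.restrict (Set.Ioi (0:ℝ))] x := by
      rw [Filter.EventuallyEq, ae_restrict_iff' measurableSet_Ioi]
      have hsub : {s : ℝ | ¬ (s ∈ Set.Ioi (0:ℝ) → Set.indicator (Set.Ioo 0 T') x s = x s)}
          ⊆ {T'} := by
        intro s hs
        simp only [Set.mem_setOf_eq, Classical.not_imp] at hs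
        obtain ⟨hs0, hsne⟩ := hs
        by_contra hne
        apply hsne
        rcases lt_trichotomy s T' with h|h|h
        · rw [Set.indicator_of_mem (Set.mem_Ioo.2 ⟨Set.mem_Ioi.1 hs0, h⟩)]
        · exact absurd (Set.mem_singleton_iff.2 h) hne
        · rw [Set.indicator_of_notMem
            (fun hmem => absurd (Set.mem_Ioo.1 hmem).2 (not_lt.2 h.le)), hzero s h]
      have : volume ({s : ℝ | ¬ (s ∈ Set.Ioi (0:ℝ) → Set.indicator (Set.Ioo 0 T') x s = x s)}) = 0 :=
        measure_mono_null hsub (measure_singleton T')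
      exact (ae_iff).2 this
    exact ((hind.restrict).aestronglyMeasurable).congr hae
  -- monotonicity gives contradiction
  have hmono := x_mono hlam hnn heq hm
  have ht₁T' : t₁ ≤ T' := by
    by_contra h
    exact hxt₁ (hzero t₁ (lt_of_not_ge h))
  have hle : x t₁ ≤ x (T' + 1) :=
    hmono (Set.mem_Ici.2 ht₁) (Set.mem_Ici.2 (by linarith)) (by linarith)
  rw [hzero (T' + 1) (by linarith)] at hle
  exact hxt₁ (le_antisymm hle (hnn t₁ ht₁))

/-- x is continuous on [0,∞). -/
lemma x_contOn (hlam : 0 < lam) (hx : IsBAFixedPoint lam x) :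
    ContinuousOn x (Set.Ici 0) := by
  intro t ht
  simp only [Set.mem_Ici] at ht
  obtain ⟨s, hts, hsne⟩ := exists_ne_beyond hlam hx t ht
  have hs0 : 0 ≤ s := ht.trans hts.le
  have hc := cont_of_ne (heq' hx) hs0 hsne
  refine (hc.continuousWithinAt ⟨ht, hts.le⟩).mono_of_mem_nhdsWithin ?_
  have hsub : Set.Ici 0 ∩ Set.Iio s ⊆ Set.Icc 0 s := fun z hz => ⟨hz.1, hz.2.le⟩
  exact Filter.mem_of_superset
    (Filter.inter_mem self_mem_nhdsWithin
      (mem_nhdsWithin_of_mem_nhds (Iio_mem_nhds hts))) hsub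

/-- helper FTC lemma -/
lemma hasDerivWithinAt_primitive_Ici {f : ℝ → ℝ} (hc : ContinuousOn f (Set.Ici 0))
    {b : ℝ} (hb : 0 ≤ b) :
    HasDerivWithinAt (fun u => ∫ s in (0:ℝ)..u, f s) (f b) (Set.Ici 0) b := by
  have hint : IntervalIntegrable f volume 0 b :=
    (hc.mono (by rw [Set.uIcc_of_le hb]; exact fun z hz => hz.1)).intervalIntegrable
  rcases eq_or_lt_of_le hb with h|h
  · subst h
    exact intervalIntegral.integral_hasDerivWithinAt_right hint
      ⟨Set.Ici 0, Filter.mem_of_superset self_mem_nhdsWithin Set.Ioi_subset_Ici_self,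
        hc.aestronglyMeasurable measurableSet_Ici⟩
      ((hc.continuousWithinAt (by simp)).mono Set.Ioi_subset_Ici_self)
  · have hnb : Set.Ici (0:ℝ) ∈ nhds b := Ici_mem_nhds h
    have H : HasDerivAt (fun u => ∫ s in (0:ℝ)..u, f s) (f b) b :=
      intervalIntegral.integral_hasDerivAt_right hint
        ⟨Set.Ici 0, hnb, hc.aestronglyMeasurable measurableSet_Ici⟩
        ((hc.continuousWithinAt (le_of_lt h)).continuousAt hnb)
    exact H.hasDerivWithinAt

end BAProofAux

open BAProofAux Set

/-- any BA fixed point is twice continuously differentiable on [0,∞),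
satisfies x'' − x' + λ(1 − e^{−x}) = 0 there, and 0 < x' < λ on [0,∞). -/
theorem ba_fixed_point_regularity {lam : ℝ} (hlam : 0 < lam) {x : ℝ → ℝ}
    (hx : IsBAFixedPoint lam x) :
    ContDiffOn ℝ 2 x (Set.Ici 0) ∧
    (∀ t, 0 ≤ t →
      derivWithin (derivWithin x (Set.Ici 0)) (Set.Ici 0) t
        - derivWithin x (Set.Ici 0) t + lam * (1 - Real.exp (-x t)) = 0) ∧
    (∀ t, 0 ≤ t →
      0 < derivWithin x (Set.Ici 0) t ∧ derivWithin x (Set.Ici 0) t < lam) := by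
  have heq := heq' hx
  have hcontx : ContinuousOn x (Set.Ici 0) := x_contOn hlam hx
  obtain ⟨hnn, h0, -, hne, -⟩ := id hx
  have hm : AEStronglyMeasurable x (volume.restrict (Set.Ioi (0:ℝ))) :=
    (hcontx.aestronglyMeasurable measurableSet_Ici).mono_measure
      (Measure.restrict_mono Set.Ioi_subset_Ici_self le_rfl)
  have hmono := x_mono hlam hnn heq hm
  have hFcont : ContinuousOn (FF lam x) (Set.Ici 0) := FF_contOn hlam hnn hm
  have hhcont : ContinuousOn (hh lam x) (Set.Ici 0) := by
    unfold hh baPhi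
    exact ((continuousOn_const.mul
      (continuousOn_const.sub ((Real.continuous_exp.comp continuous_neg).comp_continuousOn
        hcontx))).mul (Real.continuous_exp.comp continuous_neg).continuousOn)
  have uniq : UniqueDiffOn ℝ (Set.Ici (0:ℝ)) := uniqueDiffOn_Ici 0
  -- first derivative
  have hasderivx : ∀ t ∈ Set.Ici (0:ℝ), HasDerivWithinAt x (FF lam x t) (Set.Ici 0) t := by
    intro t ht
    exact (hasDerivWithinAt_primitive_Ici hFcont ht).congr
      (fun y hy => heq y hy) (heq t ht)
  -- derivative of gg
  have hasderivg : ∀ t ∈ Set.Ici (0:ℝ),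
      HasDerivWithinAt (gg lam x) (-(hh lam x t)) (Set.Ici 0) t := by
    intro t ht
    have hprim := (hasDerivWithinAt_primitive_Ici hhcont ht).const_sub (gg lam x 0)
    refine hprim.congr (fun y hy => ?_) ?_
    · have := gg_split hlam hnn hm le_rfl (Set.mem_Ici.1 hy)
      rw [intervalIntegral.integral_of_le (Set.mem_Ici.1 hy)]
      linarith
    · have := gg_split hlam hnn hm le_rfl (Set.mem_Ici.1 ht)
      rw [intervalIntegral.integral_of_le (Set.mem_Ici.1 ht)]
      linarith
  -- derivative of FF
  have hexpmul : ∀ t : ℝ, Real.exp t * Real.exp (-t) = 1 := by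
    intro t; rw [← Real.exp_add]; simp
  have hasderivF : ∀ t ∈ Set.Ici (0:ℝ),
      HasDerivWithinAt (FF lam x) (FF lam x t - baPhi lam (x t)) (Set.Ici 0) t := by
    intro t ht
    have h1 := ((Real.hasDerivAt_exp t).hasDerivWithinAt.mul (hasderivg t ht))
    have h2 : Real.exp t * gg lam x t + Real.exp t * -hh lam x t
        = FF lam x t - baPhi lam (x t) := by
      have h3 := hexpmul t
      simp only [FF, hh]
      linear_combination (-(baPhi lam (x t))) * h3
    rw [h2] at h1
    exact h1
  have d1 : ∀ t ∈ Set.Ici (0:ℝ), derivWithin x (Set.Ici 0) t = FF lam x t :=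
    fun t ht => (hasderivx t ht).derivWithin (uniq t ht)
  have dF : ∀ t ∈ Set.Ici (0:ℝ),
      derivWithin (FF lam x) (Set.Ici 0) t = FF lam x t - baPhi lam (x t) :=
    fun t ht => (hasderivF t ht).derivWithin (uniq t ht)
  have d2 : ∀ t ∈ Set.Ici (0:ℝ),
      derivWithin (derivWithin x (Set.Ici 0)) (Set.Ici 0) t
        = FF lam x t - baPhi lam (x t) := by
    intro t ht
    rw [derivWithin_congr (fun y hy => d1 y hy) (d1 t ht)]
    exact dF t ht
  -- positivity of gg
  have ggpos : ∀ t, 0 ≤ t → 0 < gg lam x t := by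
    intro t ht
    rcases (gg_nonneg hlam hnn ht).lt_or_eq with h|h
    · exact h
    exfalso
    have hint := hh_integrableOn hlam hnn hm ht
    have hnnae : 0 ≤ᵐ[volume.restrict (Set.Ioi t)] hh lam x := by
      refine (ae_restrict_iff' measurableSet_Ioi).2 ?_
      exact Filter.Eventually.of_forall fun s hs => hh_nonneg hlam hnn (ht.trans (le_of_lt hs))
    have hzero : hh lam x =ᵐ[volume.restrict (Set.Ioi t)] 0 :=
      (integral_eq_zero_iff_of_nonneg_ae hnnae hint).1 h.symm
    obtain ⟨s, hts, hsne⟩ := exists_ne_beyond hlam hx t ht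
    have hs0 : 0 ≤ s := ht.trans hts.le
    have hxs : 0 < x s := (hnn s hs0).lt_of_ne (Ne.symm hsne)
    have hsub : Set.Ici s ⊆ {a : ℝ | ¬ hh lam x a = 0} ∩ Set.Ioi t := by
      intro a ha
      simp only [Set.mem_Ici] at ha
      refine ⟨?_, lt_of_lt_of_le hts ha⟩
      have hxa : 0 < x a := lt_of_lt_of_le hxs (hmono (Set.mem_Ici.2 hs0)
        (Set.mem_Ici.2 (hs0.trans ha)) ha)
      exact (mul_pos (phi_pos hlam hxa) (Real.exp_pos _)).ne'
    have h0 : volume.restrict (Set.Ioi t) {a : ℝ | ¬ hh lam x a = 0} = 0 := by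
      have := hzero
      rw [Filter.EventuallyEq, ae_iff] at this
      simpa using this
    rw [Measure.restrict_apply' measurableSet_Ioi] at h0
    have hIci : volume (Set.Ici s) = 0 := measure_mono_null hsub h0
    simp [Real.volume_Ici] at hIci
  -- strict upper bound
  have hFlt : ∀ t, 0 ≤ t → FF lam x t < lam := by
    intro t ht
    have hbd : IntegrableOn (fun s : ℝ => lam * Real.exp (-s)) (Set.Ioi t) := by
      have := (exp_neg_integrableOn_Ioi t (b := 1) one_pos).const_mul lam
      simpa [IntegrableOn] using this
    have hint := hh_integrableOn hlam hnn hm ht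
    have key : gg lam x t < lam * Real.exp (-t) := by
      have hpos : 0 < ∫ s in Set.Ioi t, (lam * Real.exp (-s) - hh lam x s) := by
        refine (setIntegral_pos_iff_support_of_nonneg_ae ?swap1 (hbd.sub hint)).2 ?_
        case swap1 =>
          refine (ae_restrict_iff' measurableSet_Ioi).2 ?_
          exact Filter.Eventually.of_forall fun s hs => by
            have := hh_lt (x := x) hlam (s := s)
            simp only [Pi.zero_apply, Pi.sub_apply]
            linarith
        · refine lt_of_lt_of_le ?_ (measure_mono (?_ :
            Set.Ioi t ⊆ Function.support (fun s => lam * Real.exp (-s) - hh lam x s) ∩ Set.Ioi t))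
          · rw [Real.volume_Ioi]; exact ENNReal.zero_lt_top
          · intro s hs
            refine ⟨?_, hs⟩
            have := hh_lt (x := x) hlam (s := s)
            simp only [Function.mem_support]
            intro hcontra; rw [sub_eq_zero] at hcontra; exact absurd hcontra.symm (ne_of_lt this)
      have hsplit : ∫ s in Set.Ioi t, (lam * Real.exp (-s) - hh lam x s)
          = (∫ s in Set.Ioi t, lam * Real.exp (-s)) - gg lam x t :=
        integral_sub hbd hint
      have hval : ∫ s in Set.Ioi t, lam * Real.exp (-s) = lam * Real.exp (-t) := by
        rw [integral_const_mul, integral_exp_neg_Ioi]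
      rw [hsplit, hval] at hpos
      linarith
    have : FF lam x t < Real.exp t * (lam * Real.exp (-t)) :=
      mul_lt_mul_of_pos_left key (Real.exp_pos _)
    calc FF lam x t < Real.exp t * (lam * Real.exp (-t)) := this
      _ = lam * (Real.exp t * Real.exp (-t)) := by ring
      _ = lam := by rw [hexpmul]; ring
  -- assemble
  refine ⟨?_, ?_, ?_⟩
  · -- ContDiffOn
    have hdiffx : DifferentiableOn ℝ x (Set.Ici 0) :=
      fun t ht => (hasderivx t ht).differentiableWithinAt
    have hdiffF : DifferentiableOn ℝ (FF lam x) (Set.Ici 0) :=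
      fun t ht => (hasderivF t ht).differentiableWithinAt
    have hcF' : ContinuousOn (fun t => FF lam x t - baPhi lam (x t)) (Set.Ici 0) := by
      refine hFcont.sub ?_
      unfold baPhi
      exact continuousOn_const.mul
        (continuousOn_const.sub ((Real.continuous_exp.comp continuous_neg).comp_continuousOn
          hcontx))
    have hF1 : ContDiffOn ℝ 1 (FF lam x) (Set.Ici 0) := by
      rw [show (1 : WithTop ℕ∞) = 0 + 1 by norm_num, contDiffOn_succ_iff_derivWithin uniq]
      refine ⟨hdiffF, by simp, ?_⟩
      rw [contDiffOn_zero]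
      exact hcF'.congr fun t ht => dF t ht
    rw [show (2 : WithTop ℕ∞) = 1 + 1 by norm_num, contDiffOn_succ_iff_derivWithin uniq]
    refine ⟨hdiffx, by simp, ?_⟩
    exact hF1.congr fun t ht => d1 t ht
  · intro t ht
    rw [d2 t ht, d1 t ht]
    simp only [baPhi]
    ring
  · intro t ht
    rw [d1 t ht]
    exact ⟨mul_pos (Real.exp_pos _) (ggpos t ht), hFlt t ht⟩
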